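/- Let t ∈ (0,1]. For all families (H_i)_{i∈ℤ}, (K_i)_{i∈ℤ} of complex Hilbert spaces with ℓ²-direct sums H, K, and every bounded linear operator T : H → K, there exists a bounded linear operator S : H → K whose matrix entries satisfy S_{ij} = φ_t(i,j)·T_{ij} for all i,j ∈ ℤ, and ‖S‖ ≤ (π·(t^{1/2} + t^{−1/2})/√3)·‖T‖. Here φ_t(i,j) := 1/[(i−j)/2]_t for i ≠ j and φ_t(i,i) := 0. -/

import Mathlib

open scoped ENNReal

/-- The `q`-number `[a]_t = (t^a - t^{-a})/(t - t⁻¹)` for `t ≠ 1`, and `a` for `t = 1`. -/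
noncomputable def qNum (t a : ℝ) : ℝ :=
  if t = 1 then a else (t ^ a - t ^ (-a)) / (t - t⁻¹)

/-- The Schur multiplier `φ_t(i,j) = 1/[(i−j)/2]_t` for `i ≠ j` and `φ_t(i,i) = 0`. -/
noncomputable def phiMul (t : ℝ) (i j : ℤ) : ℂ :=
  if i = j then 0 else ((qNum t (((i : ℝ) - (j : ℝ)) / 2))⁻¹ : ℝ)

variable {H K : ℤ → Type} [∀ i, NormedAddCommGroup (H i)] [∀ i, InnerProductSpace ℂ (H i)]
  [∀ i, CompleteSpace (H i)] [∀ i, NormedAddCommGroup (K i)] [∀ i, InnerProductSpace ℂ (K i)]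
  [∀ i, CompleteSpace (K i)]

/-- The `(i,j)` matrix entry `T_{ij} = P_i ∘ T ∘ ι_j : H_j → K_i` of a bounded operator
between ℓ²-direct sums. -/
noncomputable def matrixEntry (T : lp H 2 →L[ℂ] lp K 2) (i j : ℤ) (v : H j) : K i :=
  T (lp.single 2 j v) i

/-! ### Auxiliary material -/

section Aux

open MeasureTheory

noncomputable section


-- key induction
lemma key_ineq {s : ℝ} (h0 : 0 < s) (h1 : s < 1) (n : ℕ) :
    (n : ℝ) * (s⁻¹ - s) ≤ s⁻¹ ^ n - s ^ n := by
  induction n with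
  | zero => simp
  | succ n ih =>
    have hb0 : 0 < s ^ n := pow_pos h0 n
    have hb1 : s ^ n ≤ 1 := pow_le_one₀ h0.le h1.le
    have ha1 : 1 ≤ s⁻¹ ^ n := one_le_pow₀ (one_le_inv_iff₀.2 ⟨h0, h1.le⟩)
    have hab : s⁻¹ ^ n * s ^ n = 1 := by
      rw [← mul_pow]; simp [inv_mul_cancel₀ h0.ne']
    have hsinv : s * s⁻¹ = 1 := mul_inv_cancel₀ h0.ne'
    have h5 : 1 - s ≤ s⁻¹ - 1 := by nlinarith
    have h6 : 2 ≤ s⁻¹ ^ n + s ^ n := by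
      nlinarith [mul_nonneg (sub_nonneg.2 ha1) (sub_nonneg.2 hb1)]
    have h7 : (1 - s ^ n) * (1 - s) ≤ (s⁻¹ ^ n - 1) * (s⁻¹ - 1) :=
      mul_le_mul (by linarith) (by linarith) (by linarith) (by linarith)
    rw [pow_succ, pow_succ]
    push_cast
    nlinarith [ih, h7]

lemma qNum_lower {t : ℝ} (ht0 : 0 < t) (ht1 : t ≤ 1) (n : ℕ) (hn : 1 ≤ n) :
    (n : ℝ) / (t ^ ((1:ℝ)/2) + (t ^ ((1:ℝ)/2))⁻¹) ≤ qNum t ((n : ℝ) / 2) := by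
  rcases eq_or_lt_of_le ht1 with rfl | ht1'
  · rw [qNum, if_pos rfl]
    rw [Real.one_rpow]
    norm_num
  · set s : ℝ := t ^ ((1:ℝ)/2) with hs
    have hs0 : 0 < s := Real.rpow_pos_of_pos ht0 _
    have hB : 0 < s + s⁻¹ := by positivity
    have hs1 : s < 1 := Real.rpow_lt_one ht0.le ht1' (by norm_num)
    have h1 : t ^ ((n:ℝ)/2) = s ^ n := by
      rw [hs, ← Real.rpow_natCast (t ^ ((1:ℝ)/2)) n, ← Real.rpow_mul ht0.le]
      ring_nf
    have h2 : t ^ (-((n:ℝ)/2)) = (s⁻¹) ^ n := by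
      rw [inv_pow, ← h1, ← Real.rpow_neg ht0.le]
    have h3 : t = s ^ 2 := by
      rw [hs, ← Real.rpow_natCast (t ^ ((1:ℝ)/2)) 2, ← Real.rpow_mul ht0.le]
      norm_num
    have hA : 0 < s⁻¹ - s := by nlinarith [mul_inv_cancel₀ hs0.ne']
    have hkey := key_ineq hs0 hs1 n
    have hD : 0 < s⁻¹ ^ n - s ^ n := lt_of_lt_of_le (by positivity) hkey
    rw [qNum, if_neg (by linarith), h1, h2, h3]
    have hdenom : s ^ 2 - (s ^ 2)⁻¹ = -((s⁻¹ - s) * (s⁻¹ + s)) := by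
      field_simp
      ring
    rw [hdenom, div_neg, ← neg_div, neg_sub]
    rw [div_le_div_iff₀ hB (by positivity)]
    calc (n:ℝ) * ((s⁻¹ - s) * (s⁻¹ + s)) = ((n:ℝ) * (s⁻¹ - s)) * (s⁻¹ + s) := by ring
    _ ≤ (s⁻¹ ^ n - s ^ n) * (s⁻¹ + s) := by
        apply mul_le_mul_of_nonneg_right hkey (by positivity)
    _ = (s⁻¹ ^ n - s ^ n) * (s + s⁻¹) := by ring

lemma qNum_inv_bound {t : ℝ} (ht0 : 0 < t) (ht1 : t ≤ 1) (n : ℕ) (hn : 1 ≤ n) :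
    |(qNum t ((n : ℝ) / 2))⁻¹| ≤ (t ^ ((1:ℝ)/2) + (t ^ ((1:ℝ)/2))⁻¹) / n := by
  set s : ℝ := t ^ ((1:ℝ)/2)
  have hs0 : 0 < s := Real.rpow_pos_of_pos ht0 _
  have hB : 0 < s + s⁻¹ := by positivity
  have hn' : (0:ℝ) < n := by exact_mod_cast hn
  have hlow := qNum_lower ht0 ht1 n hn
  have hq0 : 0 < qNum t ((n:ℝ)/2) := lt_of_lt_of_le (by positivity) hlow
  rw [abs_of_pos (inv_pos.2 hq0)]
  calc (qNum t ((n:ℝ)/2))⁻¹ ≤ ((n:ℝ) / (s + s⁻¹))⁻¹ :=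
        inv_anti₀ (by positivity) hlow
  _ = (s + s⁻¹) / n := by rw [inv_div]

lemma qNum_neg (t a : ℝ) : qNum t (-a) = - qNum t a := by
  unfold qNum
  split_ifs with h
  · ring
  · rw [neg_neg]; ring


instance fact2pi : Fact (0 < 2 * Real.pi) := ⟨by positivity⟩



variable {E : ℤ → Type} [∀ i, NormedAddCommGroup (E i)] [∀ i, NormedSpace ℂ (E i)]

lemma norm_fourier_smul (θ : AddCircle (2 * Real.pi)) (j : ℤ) (v : E j) :
    ‖fourier j θ • v‖ = ‖v‖ := by
  rw [norm_smul]
  have : ‖fourier j θ‖ = 1 := by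
    rw [fourier_apply, Circle.norm_coe]
  rw [this, one_mul]

lemma memℓp_u (θ : AddCircle (2 * Real.pi)) (x : lp E 2) :
    Memℓp (fun j => fourier j θ • (x j : E j)) 2 := by
  apply memℓp_gen
  have he : (fun j => ‖fourier j θ • (x j : E j)‖ ^ (2:ℝ≥0∞).toReal)
      = fun j => ‖x j‖ ^ (2:ℝ≥0∞).toReal := by
    funext j; rw [norm_fourier_smul]
  rw [he]
  exact (lp.memℓp x).summable (by norm_num)

/-- The diagonal unitary `x ↦ (e^{ijθ} x_j)_j` on `ℓ²(ℤ, E)`. -/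
def uIso (θ : AddCircle (2 * Real.pi)) : lp E 2 →ₗᵢ[ℂ] lp E 2 where
  toFun x := ⟨fun j => fourier j θ • (x j : E j), memℓp_u θ x⟩
  map_add' x y := by
    apply lp.ext
    funext j
    simp [lp.coeFn_add, Pi.add_apply, smul_add]
    rfl
  map_smul' c x := by
    apply lp.ext
    funext j
    simp only [RingHom.id_apply, lp.coeFn_smul, Pi.smul_apply]
    exact smul_comm _ _ _
  norm_map' x := by
    show ‖(⟨fun j => fourier j θ • (x j : E j), memℓp_u θ x⟩ : lp E 2)‖ = ‖x‖
    rw [lp.norm_eq_tsum_rpow (by norm_num) _, lp.norm_eq_tsum_rpow (by norm_num) x]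
    congr 1
    apply tsum_congr
    intro j
    have : ‖(⟨fun j => fourier j θ • (x j : E j), memℓp_u θ x⟩ : lp E 2) j‖
        = ‖(x j : E j)‖ := norm_fourier_smul θ j (x j)
    rw [this]

lemma uIso_apply (θ : AddCircle (2 * Real.pi)) (x : lp E 2) (j : ℤ) :
    (uIso θ x : ∀ i, E i) j = fourier j θ • (x j : E j) := rfl

lemma uIso_single (θ : AddCircle (2 * Real.pi)) (j : ℤ) (v : E j) :
    uIso θ (lp.single 2 j v) = fourier j θ • lp.single 2 j v := by
  apply lp.ext
  funext k
  rw [lp.coeFn_smul, Pi.smul_apply, uIso_apply]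
  rcases eq_or_ne k j with rfl | hk
  · simp [lp.single_apply_self]
  · rw [lp.single_apply_ne _ _ _ hk, smul_zero, smul_zero]

lemma continuous_uIso_apply (y : lp E 2) :
    Continuous fun θ : AddCircle (2 * Real.pi) => uIso θ y := by
  have key : TendstoUniformly
      (fun (F : Finset ℤ) (θ : AddCircle (2 * Real.pi)) =>
        uIso θ (∑ j ∈ F, lp.single 2 j (y j : E j)))
      (fun θ => uIso θ y) Filter.atTop := by
    rw [Metric.tendstoUniformly_iff]
    intro ε hε
    have hsum' := lp.hasSum_single (E := E) (p := 2) (by norm_num) y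
    rw [HasSum, Metric.tendsto_nhds] at hsum'
    filter_upwards [hsum' ε hε] with F hF θ
    have : dist (uIso θ y) (uIso θ (∑ j ∈ F, lp.single 2 j (y j : E j)))
        = dist y (∑ j ∈ F, lp.single 2 j (y j : E j)) := (uIso θ).isometry.dist_eq _ _
    rw [this, dist_comm]
    exact hF
  refine key.continuous (Filter.Eventually.frequently ?_)
  filter_upwards with F
  have : (fun θ : AddCircle (2 * Real.pi) => uIso θ (∑ j ∈ F, lp.single 2 j (y j : E j)))
      = fun θ => ∑ j ∈ F, fourier j θ • lp.single 2 j (y j : E j) := by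
    funext θ
    rw [map_sum]
    exact Finset.sum_congr rfl fun j _ => uIso_single θ j (y j)
  rw [this]
  apply continuous_finset_sum
  intro j _
  exact ((fourier j).continuous).smul continuous_const

lemma continuous_uIso_comp {k : AddCircle (2 * Real.pi) → lp E 2} (hk : Continuous k) :
    Continuous fun θ => uIso θ (k θ) := by
  rw [continuous_iff_continuousAt]
  intro θ₀
  have h1 : Filter.Tendsto (fun θ => uIso θ (k θ) - uIso θ (k θ₀)) (nhds θ₀) (nhds 0) := by
    rw [tendsto_zero_iff_norm_tendsto_zero]
    have he : (fun θ => ‖uIso θ (k θ) - uIso θ (k θ₀)‖) = fun θ => ‖k θ - k θ₀‖ := by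
      funext θ
      rw [← map_sub, (uIso θ).norm_map]
    rw [he]
    have := (hk.tendsto θ₀).sub (tendsto_const_nhds (x := k θ₀))
    simpa [Function.comp_def] using (continuous_norm.tendsto (0 : lp E 2)).comp (by simpa using this)
  have h2 : Filter.Tendsto (fun θ => uIso θ (k θ₀)) (nhds θ₀) (nhds (uIso θ₀ (k θ₀))) :=
    (continuous_uIso_apply (k θ₀)).tendsto θ₀
  have := h1.add h2
  rw [zero_add] at this
  unfold ContinuousAt
  convert this using 2 with θ
  abel


/-- Coordinate projection as a continuous linear map. -/
def projCLM (i : ℤ) : lp E 2 →L[ℂ] E i :=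
  LinearMap.mkContinuous
    { toFun := fun x => x i
      map_add' := fun x y => rfl
      map_smul' := fun c x => rfl }
    1 (fun x => by rw [one_mul]; exact lp.norm_apply_le_norm (by norm_num) x i)


/-- Normalized Haar measure on the circle of circumference `2π`. -/
abbrev μ2π : MeasureTheory.Measure (AddCircle (2 * Real.pi)) := AddCircle.haarAddCircle

section Op

set_option linter.unusedSectionVars false

variable (g : Lp ℂ 2 μ2π) (T : lp H 2 →L[ℂ] lp K 2)

/-- The integrand `θ ↦ g(θ) · U_θ T U_θ⁻¹ x`. -/
def integrandFn (x : lp H 2) (θ : AddCircle (2 * Real.pi)) : lp K 2 :=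
  (⇑g : AddCircle (2 * Real.pi) → ℂ) θ • uIso θ (T (uIso (-θ) x))

lemma continuous_conj (x : lp H 2) :
    Continuous fun θ : AddCircle (2 * Real.pi) => uIso θ (T (uIso (-θ) x)) := by
  apply continuous_uIso_comp
  apply T.continuous.comp
  exact (continuous_uIso_apply x).comp continuous_neg

lemma integrand_norm_le (x : lp H 2) (θ : AddCircle (2 * Real.pi)) :
    ‖integrandFn g T x θ‖ ≤ ‖(⇑g : AddCircle (2 * Real.pi) → ℂ) θ‖ * (‖T‖ * ‖x‖) := by
  rw [integrandFn, norm_smul]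
  apply mul_le_mul_of_nonneg_left _ (norm_nonneg _)
  rw [(uIso θ).norm_map]
  calc ‖T (uIso (-θ) x)‖ ≤ ‖T‖ * ‖uIso (-θ) x‖ := T.le_opNorm _
  _ = ‖T‖ * ‖x‖ := by rw [(uIso (-θ)).norm_map]

lemma integrable_integrand (x : lp H 2) :
    Integrable (integrandFn g T x) μ2π := by
  have hgmeas : AEStronglyMeasurable (⇑g) μ2π := (Lp.memLp g).aestronglyMeasurable
  have hgint : Integrable (⇑g) μ2π := (Lp.memLp g).integrable one_le_two
  refine Integrable.mono' (hgint.norm.mul_const (‖T‖ * ‖x‖))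
    (hgmeas.smul (continuous_conj T x).aestronglyMeasurable) ?_
  filter_upwards with θ
  exact integrand_norm_le g T x θ

/-- The averaged operator, as a linear map. -/
def SopLin : lp H 2 →ₗ[ℂ] lp K 2 where
  toFun x := ∫ θ, integrandFn g T x θ ∂μ2π
  map_add' x y := by
    have he : integrandFn g T (x + y) = fun θ => integrandFn g T x θ + integrandFn g T y θ := by
      funext θ
      rw [integrandFn, integrandFn, integrandFn, (uIso (-θ)).map_add, T.map_add,
        (uIso θ).map_add, smul_add]
    show (∫ θ, integrandFn g T (x + y) θ ∂μ2π)
        = (∫ θ, integrandFn g T x θ ∂μ2π) + ∫ θ, integrandFn g T y θ ∂μ2π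
    rw [he, integral_add (integrable_integrand g T x) (integrable_integrand g T y)]
  map_smul' c x := by
    have he : integrandFn g T (c • x) = fun θ => c • integrandFn g T x θ := by
      funext θ
      rw [integrandFn, integrandFn, (uIso (-θ)).map_smul, T.map_smul, (uIso θ).map_smul,
        smul_comm]
    show (∫ θ, integrandFn g T (c • x) θ ∂μ2π) = c • ∫ θ, integrandFn g T x θ ∂μ2π
    rw [he, integral_smul]

lemma SopLin_norm_le (x : lp H 2) :
    ‖SopLin g T x‖ ≤ (∫ θ, ‖(⇑g : AddCircle (2 * Real.pi) → ℂ) θ‖ ∂μ2π) * ‖T‖ * ‖x‖ := by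
  have hgint : Integrable (⇑g) μ2π := (Lp.memLp g).integrable one_le_two
  have h1 : ‖SopLin g T x‖ ≤ ∫ θ, ‖integrandFn g T x θ‖ ∂μ2π :=
    norm_integral_le_integral_norm _
  have h2 : ∫ θ, ‖integrandFn g T x θ‖ ∂μ2π
      ≤ ∫ θ, ‖(⇑g : AddCircle (2 * Real.pi) → ℂ) θ‖ * (‖T‖ * ‖x‖) ∂μ2π := by
    apply integral_mono (integrable_integrand g T x).norm (hgint.norm.mul_const _)
    intro θ
    exact integrand_norm_le g T x θ
  calc ‖SopLin g T x‖ ≤ ∫ θ, ‖(⇑g : AddCircle (2 * Real.pi) → ℂ) θ‖ * (‖T‖ * ‖x‖) ∂μ2π :=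
        h1.trans h2
  _ = (∫ θ, ‖(⇑g : AddCircle (2 * Real.pi) → ℂ) θ‖ ∂μ2π) * (‖T‖ * ‖x‖) :=
        integral_mul_const _ _
  _ = _ := by ring

/-- The averaged operator `S = ∫ g(θ) U_θ T U_θ⁻¹ dθ`. -/
def Sop : lp H 2 →L[ℂ] lp K 2 :=
  (SopLin g T).mkContinuous ((∫ θ, ‖(⇑g : AddCircle (2 * Real.pi) → ℂ) θ‖ ∂μ2π) * ‖T‖)
    (fun x => by rw [mul_assoc]; exact SopLin_norm_le g T x |>.trans (by rw [mul_assoc]))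

lemma Sop_norm_le :
    ‖Sop g T‖ ≤ (∫ θ, ‖(⇑g : AddCircle (2 * Real.pi) → ℂ) θ‖ ∂μ2π) * ‖T‖ := by
  apply LinearMap.mkContinuous_norm_le
  positivity

/-- The matrix entries of the averaged operator are the Fourier coefficients of `g` times
those of `T`. -/
lemma Sop_matrixEntry (i j : ℤ) (v : H j) :
    matrixEntry (Sop g T) i j v = fourierCoeff (⇑g) (j - i) • matrixEntry T i j v := by
  have happ : Sop g T (lp.single 2 j v) = ∫ θ, integrandFn g T (lp.single 2 j v) θ ∂μ2π :=
    rfl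
  have hcomp : ∀ θ : AddCircle (2 * Real.pi),
      projCLM (E := K) i (integrandFn g T (lp.single 2 j v) θ)
        = ((⇑g : AddCircle (2 * Real.pi) → ℂ) θ * fourier (i - j) θ) • matrixEntry T i j v := by
    intro θ
    have e1 : uIso (-θ) (lp.single 2 j v) = fourier (-j) θ • lp.single 2 j v := by
      rw [uIso_single]
      congr 1
      rw [fourier_apply, fourier_apply, smul_neg, ← neg_smul]
    have e2 : integrandFn g T (lp.single 2 j v) θ
        = ((⇑g : AddCircle (2 * Real.pi) → ℂ) θ * (fourier (-j) θ)) •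
            uIso θ (T (lp.single 2 j v)) := by
      rw [integrandFn, e1, T.map_smul, (uIso θ).map_smul, smul_smul]
    rw [e2]
    show (((⇑g : AddCircle (2 * Real.pi) → ℂ) θ * (fourier (-j) θ)) •
        uIso θ (T (lp.single 2 j v)) : lp K 2) i = _
    rw [lp.coeFn_smul, Pi.smul_apply, uIso_apply, smul_smul]
    rw [matrixEntry]
    congr 1
    have hij : -j + i = i - j := by ring
    rw [mul_assoc, ← fourier_add, hij]
  have : matrixEntry (Sop g T) i j v
      = projCLM (E := K) i (∫ θ, integrandFn g T (lp.single 2 j v) θ ∂μ2π) := by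
    rw [← happ]; rfl
  rw [this, ← ContinuousLinearMap.integral_comp_comm _ (integrable_integrand g T _)]
  simp only [hcomp]
  rw [integral_smul_const]
  congr 1
  rw [fourierCoeff]
  apply integral_congr_ae
  filter_upwards with θ
  rw [neg_sub, smul_eq_mul, mul_comm]

end Op

end
end Aux

section Chi

open MeasureTheory

noncomputable section

/-- The sequence of Fourier coefficients of the multiplier function. -/
def chi (t : ℝ) (m : ℤ) : ℂ := if m = 0 then 0 else (((qNum t (-(m : ℝ) / 2))⁻¹ : ℝ) : ℂ)

lemma chi_eq_phiMul (t : ℝ) (i j : ℤ) : chi t (j - i) = phiMul t i j := by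
  rw [chi, phiMul]
  rcases eq_or_ne i j with rfl | h
  · simp
  · rw [if_neg (fun hc => h (by omega)), if_neg h]
    have harg : -(((j - i : ℤ) : ℝ)) / 2 = ((i : ℝ) - (j : ℝ)) / 2 := by push_cast; ring
    rw [harg]

lemma chi_norm_sq_le {t : ℝ} (ht0 : 0 < t) (ht1 : t ≤ 1) (m : ℤ) :
    ‖chi t m‖ ^ (2 : ℝ≥0∞).toReal ≤
      (if m = 0 then 0
        else (t ^ ((1:ℝ)/2) + (t ^ ((1:ℝ)/2))⁻¹) ^ 2 * ((1:ℝ) / (m : ℝ) ^ 2)) := by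
  have h2 : ((2 : ℝ≥0∞)).toReal = ((2 : ℕ) : ℝ) := by norm_num
  set s := t ^ ((1:ℝ)/2) with hs
  rcases eq_or_ne m 0 with rfl | hm
  · rw [chi, if_pos rfl, if_pos rfl, h2, Real.rpow_natCast]
    norm_num
  · rw [chi, if_neg hm, if_neg hm, h2, Real.rpow_natCast]
    rw [Complex.norm_real, Real.norm_eq_abs]
    have habs : ((m.natAbs : ℝ)) = |(m : ℝ)| := by
      rw [Nat.cast_natAbs, Int.cast_abs]
    have hb : |(qNum t (-(m : ℝ)/2))⁻¹| ≤ (s + s⁻¹) / (m.natAbs : ℝ) := by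
      rcases hm.lt_or_gt with hneg | hpos
      · have hq : -(m : ℝ)/2 = ((m.natAbs : ℝ))/2 := by
          rw [habs, abs_of_neg (by exact_mod_cast hneg : (m : ℝ) < 0)]
        rw [hq]
        exact qNum_inv_bound ht0 ht1 m.natAbs (by omega)
      · have hq : -(m : ℝ)/2 = -((m.natAbs : ℝ)/2) := by
          rw [habs, abs_of_pos (by exact_mod_cast hpos : (0 : ℝ) < (m : ℝ))]
          ring
        rw [hq, qNum_neg, inv_neg, abs_neg]
        exact qNum_inv_bound ht0 ht1 m.natAbs (by omega)
    rw [habs] at hb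
    calc |(qNum t (-(m : ℝ)/2))⁻¹| ^ 2 ≤ ((s + s⁻¹) / |(m : ℝ)|) ^ 2 :=
          pow_le_pow_left₀ (abs_nonneg _) hb 2
    _ = (s + s⁻¹) ^ 2 * (1 / (m : ℝ) ^ 2) := by
        rw [div_pow, sq_abs]; ring

lemma hasSum_bound (c : ℝ) :
    HasSum (fun m : ℤ => if m = 0 then 0 else c * ((1:ℝ) / (m : ℝ) ^ 2))
      (c * (Real.pi ^ 2 / 6) + c * (Real.pi ^ 2 / 6)) := by
  have hzeta := hasSum_zeta_two
  have hpos : HasSum (fun n : ℕ =>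
      (if ((n : ℤ)) = 0 then 0 else c * ((1:ℝ) / (((n : ℤ) : ℝ)) ^ 2)))
      (c * (Real.pi ^ 2 / 6)) := by
    have h0 := hzeta.mul_left c
    have he : (fun n : ℕ => c * ((1:ℝ) / (n : ℝ) ^ 2))
        = fun n : ℕ => (if ((n : ℤ)) = 0 then 0 else c * ((1:ℝ) / (((n : ℤ) : ℝ)) ^ 2)) := by
      funext n
      rcases eq_or_ne n 0 with rfl | hn
      · simp
      · rw [if_neg (by exact_mod_cast hn)]
        push_cast
        ring
    rw [he] at h0
    exact h0
  have hneg : HasSum (fun n : ℕ =>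
      (if (-((n : ℤ) + 1)) = 0 then 0 else c * ((1:ℝ) / ((-((n : ℤ) + 1) : ℤ) : ℝ) ^ 2)))
      (c * (Real.pi ^ 2 / 6)) := by
    have h1 : HasSum (fun n : ℕ => (1:ℝ) / ((n : ℝ) + 1) ^ 2) (Real.pi ^ 2 / 6) := by
      have h2' : HasSum (fun n : ℕ => (1:ℝ) / (((n + 1 : ℕ)) : ℝ) ^ 2) (Real.pi ^ 2 / 6) := by
        refine (hasSum_nat_add_iff (f := fun n : ℕ => (1:ℝ) / (n : ℝ) ^ 2) 1).mpr ?_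
        simpa using hzeta
      have he2 : (fun n : ℕ => (1:ℝ) / (((n + 1 : ℕ)) : ℝ) ^ 2)
          = fun n : ℕ => (1:ℝ) / ((n : ℝ) + 1) ^ 2 := by
        funext n; push_cast; ring
      exact he2 ▸ h2'
    have h0 := h1.mul_left c
    have he : (fun n : ℕ => c * ((1:ℝ) / ((n : ℝ) + 1) ^ 2))
        = fun n : ℕ => (if (-((n : ℤ) + 1)) = 0 then 0
            else c * ((1:ℝ) / ((-((n : ℤ) + 1) : ℤ) : ℝ) ^ 2)) := by
      funext n
      rw [if_neg (by omega)]
      push_cast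
      ring_nf
    rw [he] at h0
    exact h0
  exact HasSum.of_nat_of_neg_add_one hpos hneg

end
end Chi

/-- For `t ∈ (0,1]`, every bounded operator `T : ⊕_{i∈ℤ} H_i → ⊕_{i∈ℤ} K_i` between
ℓ²-direct sums of Hilbert spaces admits a bounded operator `S` with matrix entries
`S_{ij} = φ_t(i,j)·T_{ij}` and `‖S‖ ≤ (π·(t^{1/2} + t^{−1/2})/√3)·‖T‖`. -/
theorem statement7 (t : ℝ) (ht0 : 0 < t) (ht1 : t ≤ 1) (T : lp H 2 →L[ℂ] lp K 2) :
    ∃ S : lp H 2 →L[ℂ] lp K 2,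
      (∀ (i j : ℤ) (v : H j), matrixEntry S i j v = phiMul t i j • matrixEntry T i j v) ∧
      ‖S‖ ≤ Real.pi * (t ^ ((1 : ℝ) / 2) + t ^ (-(1 : ℝ) / 2)) / Real.sqrt 3 * ‖T‖ := by
  classical
  open MeasureTheory in
  set s : ℝ := t ^ ((1:ℝ)/2) with hs
  have hs0 : 0 < s := Real.rpow_pos_of_pos ht0 _
  set c : ℝ := (s + s⁻¹) ^ 2 with hc
  have hbsum : HasSum (fun m : ℤ => if m = 0 then 0 else c * ((1:ℝ) / (m : ℝ) ^ 2))
      (c * (Real.pi ^ 2 / 6) + c * (Real.pi ^ 2 / 6)) := hasSum_bound c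
  have hble : ∀ m : ℤ, ‖chi t m‖ ^ (2 : ℝ≥0∞).toReal
      ≤ (if m = 0 then 0 else c * ((1:ℝ) / (m : ℝ) ^ 2)) := by
    intro m
    have h := chi_norm_sq_le ht0 ht1 m
    rw [← hs] at h
    rw [← hc] at h
    exact h
  have hsummable : Summable (fun m : ℤ => ‖chi t m‖ ^ (2 : ℝ≥0∞).toReal) :=
    Summable.of_nonneg_of_le (fun m => Real.rpow_nonneg (norm_nonneg _) _) hble hbsum.summable
  have htsum : ∑' m : ℤ, ‖chi t m‖ ^ (2 : ℝ≥0∞).toReal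
      ≤ c * (Real.pi ^ 2 / 6) + c * (Real.pi ^ 2 / 6) := by
    calc ∑' m : ℤ, ‖chi t m‖ ^ (2 : ℝ≥0∞).toReal
        ≤ ∑' m : ℤ, (if m = 0 then 0 else c * ((1:ℝ) / (m : ℝ) ^ 2)) :=
          Summable.tsum_le_tsum hble hsummable hbsum.summable
    _ = _ := hbsum.tsum_eq
  have hmem : Memℓp (chi t) 2 := memℓp_gen hsummable
  set ψ : lp (fun _ : ℤ => ℂ) 2 := ⟨chi t, hmem⟩ with hψ
  set g : Lp ℂ 2 μ2π := fourierBasis.repr.symm ψ with hg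
  have hrepr : fourierBasis.repr g = ψ := by
    rw [hg]
    exact fourierBasis.repr.apply_symm_apply ψ
  have hcoeff : ∀ n : ℤ, fourierCoeff (⇑g) n = chi t n := by
    intro n
    rw [← fourierBasis_repr, hrepr]
  set Cst : ℝ := Real.pi * (s + s⁻¹) / Real.sqrt 3 with hCst
  have hCst0 : 0 ≤ Cst := by positivity
  have hψnorm : ‖ψ‖ ≤ Cst := by
    rw [lp.norm_eq_tsum_rpow (by norm_num) ψ]
    have hexp : (1 / (2 : ℝ≥0∞).toReal) = (1/2 : ℝ) := by norm_num
    rw [hexp, ← Real.sqrt_eq_rpow]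
    have hC2 : Cst ^ 2 = c * (Real.pi ^ 2 / 6) + c * (Real.pi ^ 2 / 6) := by
      rw [hCst, hc, div_pow, mul_pow, Real.sq_sqrt (by norm_num : (0:ℝ) ≤ 3)]
      ring
    have hψm : ∀ m : ℤ, ‖(ψ : ∀ _ : ℤ, ℂ) m‖ = ‖chi t m‖ := fun m => rfl
    have hle : ∑' m : ℤ, ‖(ψ : ∀ _ : ℤ, ℂ) m‖ ^ (2 : ℝ≥0∞).toReal ≤ Cst ^ 2 := by
      rw [hC2]
      simp only [hψm]
      exact htsum
    calc Real.sqrt (∑' m : ℤ, ‖(ψ : ∀ _ : ℤ, ℂ) m‖ ^ (2 : ℝ≥0∞).toReal)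
        ≤ Real.sqrt (Cst ^ 2) := Real.sqrt_le_sqrt hle
    _ = Cst := Real.sqrt_sq hCst0
  have hgmeas : AEStronglyMeasurable (⇑g) μ2π := (Lp.memLp g).aestronglyMeasurable
  have hgnorm : (∫ θ, ‖(⇑g : AddCircle (2 * Real.pi) → ℂ) θ‖ ∂μ2π) ≤ Cst := by
    have h1 : ∫ θ, ‖(⇑g : AddCircle (2 * Real.pi) → ℂ) θ‖ ∂μ2π
        = (eLpNorm (⇑g) 1 μ2π).toReal := by
      rw [integral_norm_eq_lintegral_enorm hgmeas, eLpNorm_one_eq_lintegral_enorm]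
    have h2 : eLpNorm (⇑g) 1 μ2π ≤ eLpNorm (⇑g) 2 μ2π :=
      eLpNorm_le_eLpNorm_of_exponent_le one_le_two hgmeas
    rw [h1]
    calc (eLpNorm (⇑g) 1 μ2π).toReal ≤ (eLpNorm (⇑g) 2 μ2π).toReal :=
          ENNReal.toReal_mono (Lp.eLpNorm_ne_top g) h2
    _ = ‖g‖ := (Lp.norm_def g).symm
    _ = ‖ψ‖ := by rw [hg]; exact fourierBasis.repr.symm.norm_map ψ
    _ ≤ Cst := hψnorm
  refine ⟨Sop g T, ?_, ?_⟩
  · intro i j v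
    rw [Sop_matrixEntry g T i j v, hcoeff, chi_eq_phiMul]
  · have h6 : Real.pi * (t ^ ((1:ℝ)/2) + t ^ (-(1:ℝ)/2)) / Real.sqrt 3 = Cst := by
      rw [hCst, hs]
      have : t ^ (-(1:ℝ)/2) = (t ^ ((1:ℝ)/2))⁻¹ := by
        rw [show (-(1:ℝ)/2) = -((1:ℝ)/2) by ring, Real.rpow_neg ht0.le]
      rw [this]
    rw [h6]
    calc ‖Sop g T‖ ≤ (∫ θ, ‖(⇑g : AddCircle (2 * Real.pi) → ℂ) θ‖ ∂μ2π) * ‖T‖ :=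
          Sop_norm_le g T
    _ ≤ Cst * ‖T‖ := mul_le_mul_of_nonneg_right hgnorm (norm_nonneg T)
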